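/- Monotone l'Hôpital's Rule: Let -∞ < a < b < ∞, and let g, h be continuous on [a,b] and differentiable on (a,b) with h' ≠ 0 on (a,b). If g'/h' is strictly increasing on (a,b), then x ↦ (g(x) - g(a))/(h(x) - h(a)) and x ↦ (g(x) - g(b))/(h(x) - h(b)) are strictly increasing on (a,b); similarly with 'decreasing' in place of 'increasing'. -/

import Mathlib

open Set

/-- Key auxiliary lemma: if at every point `x` of `(a,b)` there is a comparison point `c`
satisfying a Cauchy-MVT style identity and a positivity condition, then the slope function
relative to endpoint `e` is strictly increasing on `(a,b)`. -/
lemma lhopital_key (a b : ℝ) (g h g' h' : ℝ → ℝ)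
    (hgd : ∀ x ∈ Set.Ioo a b, HasDerivAt g (g' x) x)
    (hhd : ∀ x ∈ Set.Ioo a b, HasDerivAt h (h' x) x)
    (e : ℝ)
    (hkey : ∀ x ∈ Set.Ioo a b, ∃ c, h' c ≠ 0 ∧
      (h x - h e) * g' c = (g x - g e) * h' c ∧
      0 < (g' x / h' x - g' c / h' c) * (h' x * (h x - h e))) :
    StrictMonoOn (fun x => (g x - g e) / (h x - h e)) (Set.Ioo a b) := by
  -- numerator of the derivative is positive
  have hN : ∀ x ∈ Set.Ioo a b, 0 < g' x * (h x - h e) - (g x - g e) * h' x := by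
    intro x hx
    obtain ⟨c, hc0, hceq, hcpos⟩ := hkey x hx
    have hhx : h' x ≠ 0 := by
      intro hz; rw [hz] at hcpos; simp at hcpos
    have hx0 : h x - h e ≠ 0 := by
      intro hz; rw [hz] at hcpos; simp at hcpos
    have e1 : (h x - h e) * (g' c / h' c) = g x - g e := by
      field_simp
      linarith [hceq]
    rw [sub_mul] at hcpos
    have term1 : (g' x / h' x) * (h' x * (h x - h e)) = g' x * (h x - h e) := by
      field_simp
    have term2 : (g' c / h' c) * (h' x * (h x - h e)) = (g x - g e) * h' x := by
      linear_combination h' x * e1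
    rw [term1, term2] at hcpos
    exact hcpos
  have hx0 : ∀ x ∈ Set.Ioo a b, h x - h e ≠ 0 := by
    intro x hx
    obtain ⟨c, hc0, hceq, hcpos⟩ := hkey x hx
    intro hz; rw [hz] at hcpos; simp at hcpos
  have hd : ∀ x ∈ Set.Ioo a b, HasDerivAt (fun y => (g y - g e) / (h y - h e))
      ((g' x * (h x - h e) - (g x - g e) * h' x) / (h x - h e) ^ 2) x := by
    intro x hx
    exact ((hgd x hx).sub_const (g e)).div ((hhd x hx).sub_const (h e)) (hx0 x hx)
  apply strictMonoOn_of_hasDerivWithinAt_pos (convex_Ioo a b)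
      (f' := fun x => (g' x * (h x - h e) - (g x - g e) * h' x) / (h x - h e) ^ 2)
  · exact fun x hx => (hd x hx).continuousAt.continuousWithinAt
  · intro x hx
    rw [interior_Ioo] at hx ⊢
    exact (hd x hx).hasDerivWithinAt
  · intro x hx
    rw [interior_Ioo] at hx
    exact div_pos (hN x hx) (pow_two_pos_of_ne_zero (hx0 x hx))

/-- The strictly increasing case of the monotone l'Hôpital rule. -/
lemma lhopital_mono (a b : ℝ) (hab : a < b) (g h g' h' : ℝ → ℝ)
    (hg : ContinuousOn g (Set.Icc a b)) (hh : ContinuousOn h (Set.Icc a b))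
    (hgd : ∀ x ∈ Set.Ioo a b, HasDerivAt g (g' x) x)
    (hhd : ∀ x ∈ Set.Ioo a b, HasDerivAt h (h' x) x)
    (hh' : ∀ x ∈ Set.Ioo a b, h' x ≠ 0)
    (hmono : StrictMonoOn (fun x => g' x / h' x) (Set.Ioo a b)) :
    StrictMonoOn (fun x => (g x - g a) / (h x - h a)) (Set.Ioo a b) ∧
      StrictMonoOn (fun x => (g x - g b) / (h x - h b)) (Set.Ioo a b) := by
  -- by Darboux, h' has constant sign on (a,b)
  have hmid : (a + b) / 2 ∈ Set.Ioo a b := ⟨by linarith, by linarith⟩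
  have hdarboux : OrdConnected (h' '' Set.Ioo a b) :=
    (ordConnected_Ioo).image_hasDerivWithinAt
      (fun x hx => (hhd x hx).hasDerivWithinAt)
  have hsign : (∀ x ∈ Set.Ioo a b, 0 < h' x) ∨ (∀ x ∈ Set.Ioo a b, h' x < 0) := by
    rcases lt_or_gt_of_ne (hh' _ hmid) with hneg | hpos
    · right
      intro x hx
      by_contra hle
      have hxpos : 0 < h' x := lt_of_le_of_ne (not_lt.1 hle) (Ne.symm (hh' x hx))
      have : (0 : ℝ) ∈ h' '' Set.Ioo a b := by
        have := hdarboux.out (mem_image_of_mem h' hmid) (mem_image_of_mem h' hx)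
        exact this ⟨hneg.le, hxpos.le⟩
      obtain ⟨y, hy, hy0⟩ := this
      exact hh' y hy hy0
    · left
      intro x hx
      by_contra hle
      have hxneg : h' x < 0 := lt_of_le_of_ne (not_lt.1 hle) (hh' x hx)
      have : (0 : ℝ) ∈ h' '' Set.Ioo a b := by
        have := hdarboux.out (mem_image_of_mem h' hx) (mem_image_of_mem h' hmid)
        exact this ⟨hxneg.le, hpos.le⟩
      obtain ⟨y, hy, hy0⟩ := this
      exact hh' y hy hy0
  -- sign facts
  have hP : (∀ x ∈ Set.Ioo a b, 0 < h' x * (h x - h a)) ∧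
      (∀ x ∈ Set.Ioo a b, h' x * (h x - h b) < 0) := by
    rcases hsign with hpos | hneg
    · have hmono' : StrictMonoOn h (Set.Icc a b) := by
        apply strictMonoOn_of_hasDerivWithinAt_pos (convex_Icc a b) hh
          (f' := h')
        · intro x hx
          rw [interior_Icc] at hx ⊢
          exact (hhd x hx).hasDerivWithinAt
        · intro x hx
          rw [interior_Icc] at hx
          exact hpos x hx
      constructor
      · intro x hx
        have h1 : h a < h x := hmono' (Set.left_mem_Icc.2 hab.le)
          (Set.mem_Icc_of_Ioo hx) hx.1
        exact mul_pos (hpos x hx) (by linarith)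
      · intro x hx
        have h1 : h x < h b := hmono' (Set.mem_Icc_of_Ioo hx)
          (Set.right_mem_Icc.2 hab.le) hx.2
        exact mul_neg_of_pos_of_neg (hpos x hx) (by linarith)
    · have hanti' : StrictAntiOn h (Set.Icc a b) := by
        apply strictAntiOn_of_hasDerivWithinAt_neg (convex_Icc a b) hh
          (f' := h')
        · intro x hx
          rw [interior_Icc] at hx ⊢
          exact (hhd x hx).hasDerivWithinAt
        · intro x hx
          rw [interior_Icc] at hx
          exact hneg x hx
      constructor
      · intro x hx
        have h1 : h x < h a := hanti' (Set.left_mem_Icc.2 hab.le)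
          (Set.mem_Icc_of_Ioo hx) hx.1
        exact mul_pos_of_neg_of_neg (hneg x hx) (by linarith)
      · intro x hx
        have h1 : h b < h x := hanti' (Set.mem_Icc_of_Ioo hx)
          (Set.right_mem_Icc.2 hab.le) hx.2
        exact mul_neg_of_neg_of_pos (hneg x hx) (by linarith)
  constructor
  · -- endpoint a
    apply lhopital_key a b g h g' h' hgd hhd a
    intro x hx
    obtain ⟨c, hc, hceq⟩ := exists_ratio_hasDerivAt_eq_ratio_slope g g' hx.1
      (hg.mono (Set.Icc_subset_Icc le_rfl hx.2.le))
      (fun y (hy : y ∈ Set.Ioo a x) => hgd y ⟨hy.1, hy.2.trans hx.2⟩) h h'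
      (hh.mono (Set.Icc_subset_Icc le_rfl hx.2.le))
      (fun y (hy : y ∈ Set.Ioo a x) => hhd y ⟨hy.1, hy.2.trans hx.2⟩)
    have hcmem : c ∈ Set.Ioo a b := ⟨hc.1, hc.2.trans hx.2⟩
    refine ⟨c, hh' c hcmem, hceq, ?_⟩
    have hlt : g' c / h' c < g' x / h' x := hmono hcmem hx hc.2
    exact mul_pos (by linarith) (hP.1 x hx)
  · -- endpoint b
    apply lhopital_key a b g h g' h' hgd hhd b
    intro x hx
    obtain ⟨c, hc, hceq⟩ := exists_ratio_hasDerivAt_eq_ratio_slope g g' hx.2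
      (hg.mono (Set.Icc_subset_Icc hx.1.le le_rfl))
      (fun y (hy : y ∈ Set.Ioo x b) => hgd y ⟨hx.1.trans hy.1, hy.2⟩) h h'
      (hh.mono (Set.Icc_subset_Icc hx.1.le le_rfl))
      (fun y (hy : y ∈ Set.Ioo x b) => hhd y ⟨hx.1.trans hy.1, hy.2⟩)
    have hcmem : c ∈ Set.Ioo a b := ⟨hx.1.trans hc.1, hc.2⟩
    refine ⟨c, hh' c hcmem, by linarith [hceq], ?_⟩
    have hlt : g' x / h' x < g' c / h' c := hmono hx hcmem hc.1
    exact mul_pos_of_neg_of_neg (by linarith) (hP.2 x hx)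

theorem monotone_lhopital_rule (a b : ℝ) (hab : a < b) (g h g' h' : ℝ → ℝ)
    (hg : ContinuousOn g (Set.Icc a b)) (hh : ContinuousOn h (Set.Icc a b))
    (hgd : ∀ x ∈ Set.Ioo a b, HasDerivAt g (g' x) x)
    (hhd : ∀ x ∈ Set.Ioo a b, HasDerivAt h (h' x) x)
    (hh' : ∀ x ∈ Set.Ioo a b, h' x ≠ 0) :
    (StrictMonoOn (fun x => g' x / h' x) (Set.Ioo a b) →
      StrictMonoOn (fun x => (g x - g a) / (h x - h a)) (Set.Ioo a b) ∧
      StrictMonoOn (fun x => (g x - g b) / (h x - h b)) (Set.Ioo a b)) ∧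
    (StrictAntiOn (fun x => g' x / h' x) (Set.Ioo a b) →
      StrictAntiOn (fun x => (g x - g a) / (h x - h a)) (Set.Ioo a b) ∧
      StrictAntiOn (fun x => (g x - g b) / (h x - h b)) (Set.Ioo a b)) := by
  constructor
  · exact lhopital_mono a b hab g h g' h' hg hh hgd hhd hh'
  · intro hanti
    have hmono' : StrictMonoOn (fun x => (-g') x / h' x) (Set.Ioo a b) := by
      intro x hx y hy hxy
      have := hanti hx hy hxy
      simp only [Pi.neg_apply, neg_div]
      linarith
    have := lhopital_mono a b hab (-g) h (-g') h' hg.neg hh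
      (fun x hx => (hgd x hx).neg) hhd hh' hmono'
    constructor
    · intro x hx y hy hxy
      have h1 := this.1 hx hy hxy
      simp only [Pi.neg_apply] at h1
      have e1 : ∀ z : ℝ, (-g z - -g a) / (h z - h a) = -((g z - g a) / (h z - h a)) := by
        intro z; rw [← neg_div]; ring_nf
      rw [e1 x, e1 y] at h1
      linarith
    · intro x hx y hy hxy
      have h1 := this.2 hx hy hxy
      simp only [Pi.neg_apply] at h1
      have e1 : ∀ z : ℝ, (-g z - -g b) / (h z - h b) = -((g z - g b) / (h z - h b)) := by
        intro z; rw [← neg_div]; ring_nf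
      rw [e1 x, e1 y] at h1
      linarith
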